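/- Let p ∈ ℕ with p ≥ 1, ω > 0, and θ ∈ 𝒮(p,ω). If φ ∈ ℬ𝒫𝒞(θ) is an asymptotically unpredictable function with values in ℝ^m, then for every vector c ∈ ℝ^m and every non-singular (invertible) matrix Ω ∈ ℝ^{m×m}, the function φ̃ defined by φ̃(t) = Ωφ(t) + c belongs to ℬ𝒫𝒞(θ) and is asymptotically unpredictable. -/
import Mathlib


open Filter Topology

noncomputable section

/-- `𝒮(p,ω)`: strictly increasing sequences `θ : ℤ → ℝ` with `|θ k| → ∞` as `|k| → ∞`
and `θ (k+p) = θ k + ω` for all `k`. -/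
def SSeq (p : ℕ) (ω : ℝ) (θ : ℤ → ℝ) : Prop :=
  StrictMono θ ∧ Tendsto (fun k : ℤ => |θ k|) (cocompact ℤ) atTop ∧
    ∀ k : ℤ, θ (k + (p : ℤ)) = θ k + ω

/-- `ℬ𝒫𝒞(θ)`: bounded, continuous on each `(θ (k-1), θ k)`, right limits exist at each
`θ k`, and left-continuous at each `θ k`. -/
def BPC (m : ℕ) (θ : ℤ → ℝ) (φ : ℝ → EuclideanSpace ℝ (Fin m)) : Prop :=
  (∃ M : ℝ, ∀ t : ℝ, ‖φ t‖ ≤ M) ∧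
  (∀ k : ℤ, ContinuousOn φ (Set.Ioo (θ (k - 1)) (θ k))) ∧
  (∀ k : ℤ, ∃ L : EuclideanSpace ℝ (Fin m), Tendsto φ (nhdsWithin (θ k) (Set.Ioi (θ k))) (nhds L)) ∧
  (∀ k : ℤ, Tendsto φ (nhdsWithin (θ k) (Set.Iio (θ k))) (nhds (φ (θ k))))

/-- Conditions (i)–(iii) of Definition 2.1 with explicit data `ε₀, ν, μ, τ`. -/
def UnpredictableWith (m : ℕ) (θ : ℤ → ℝ) (ψ : ℝ → EuclideanSpace ℝ (Fin m))
    (ε₀ ν : ℝ) (μ τ : ℕ → ℝ) : Prop :=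
  0 < ε₀ ∧ 0 < ν ∧ Tendsto μ atTop atTop ∧ Tendsto τ atTop atTop ∧
  (∀ ε > (0 : ℝ), ∃ δ > (0 : ℝ), ∀ k : ℤ, ∀ s₁ ∈ Set.Ioo (θ (k - 1)) (θ k),
    ∀ s₂ ∈ Set.Ioo (θ (k - 1)) (θ k), |s₁ - s₂| < δ → ‖ψ s₁ - ψ s₂‖ < ε) ∧
  (∀ C : Set ℝ, IsCompact C →
    TendstoUniformlyOn (fun n t => ψ (t + μ n)) ψ atTop C) ∧
  (∀ n : ℕ, ∀ t ∈ Set.Icc (τ n - ν) (τ n + ν), ε₀ ≤ ‖ψ (t + μ n) - ψ t‖)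

/-- An unpredictable function in `ℬ𝒫𝒞(θ)`. -/
def Unpredictable (m : ℕ) (θ : ℤ → ℝ) (ψ : ℝ → EuclideanSpace ℝ (Fin m)) : Prop :=
  BPC m θ ψ ∧ ∃ ε₀ ν : ℝ, ∃ μ τ : ℕ → ℝ, UnpredictableWith m θ ψ ε₀ ν μ τ

/-- An asymptotically unpredictable function in `ℬ𝒫𝒞(θ)`. -/
def AsympUnpredictable (m : ℕ) (θ : ℤ → ℝ) (φ : ℝ → EuclideanSpace ℝ (Fin m)) : Prop :=
  BPC m θ φ ∧ ∃ ψ ξ : ℝ → EuclideanSpace ℝ (Fin m),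
    Unpredictable m θ ψ ∧ BPC m θ ξ ∧
    Tendsto (fun t => ‖ξ t‖) atTop (nhds (0 : ℝ)) ∧ ∀ t : ℝ, φ t = ψ t + ξ t


/-- Auxiliary: `ℬ𝒫𝒞` is preserved by `t ↦ T (φ t) + c` for a continuous linear map `T`. -/
lemma bpc_clm_add_const {m : ℕ} {θ : ℤ → ℝ} {φ : ℝ → EuclideanSpace ℝ (Fin m)}
    (h : BPC m θ φ) (T : EuclideanSpace ℝ (Fin m) →L[ℝ] EuclideanSpace ℝ (Fin m))
    (c : EuclideanSpace ℝ (Fin m)) : BPC m θ (fun t => T (φ t) + c) := by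
  obtain ⟨⟨M, hM⟩, hc, hr, hl⟩ := h
  refine ⟨⟨‖T‖ * M + ‖c‖, fun t => ?_⟩, fun k => ?_, fun k => ?_, fun k => ?_⟩
  · calc ‖T (φ t) + c‖ ≤ ‖T (φ t)‖ + ‖c‖ := norm_add_le _ _
      _ ≤ ‖T‖ * M + ‖c‖ := by
        gcongr
        exact (T.le_opNorm _).trans (by gcongr; exact hM t)
  · exact ((T.continuous.comp_continuousOn (hc k)).add continuousOn_const)
  · obtain ⟨L, hL⟩ := hr k
    exact ⟨T L + c, ((T.continuous.tendsto L).comp hL).add_const c⟩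
  · exact ((T.continuous.tendsto _).comp (hl k)).add_const c

/-- Auxiliary: unpredictability data transported through an invertible continuous linear map. -/
lemma unpred_clm_add_const {m : ℕ} {θ : ℤ → ℝ} {ψ : ℝ → EuclideanSpace ℝ (Fin m)}
    {ε₀ ν : ℝ} {μ τ : ℕ → ℝ} (h : UnpredictableWith m θ ψ ε₀ ν μ τ)
    (T T' : EuclideanSpace ℝ (Fin m) →L[ℝ] EuclideanSpace ℝ (Fin m))
    (hT' : ∀ x, T' (T x) = x) (c : EuclideanSpace ℝ (Fin m)) :
    UnpredictableWith m θ (fun t => T (ψ t) + c) (ε₀ / (‖T'‖ + 1)) ν μ τ := by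
  obtain ⟨hε₀, hν, hμ, hτ, hcont, hunif, hsep⟩ := h
  have hT'pos : (0 : ℝ) < ‖T'‖ + 1 := add_pos_of_nonneg_of_pos (norm_nonneg _) one_pos
  have key : ∀ x : EuclideanSpace ℝ (Fin m), ‖x‖ ≤ (‖T'‖ + 1) * ‖T x‖ := by
    intro x
    calc ‖x‖ = ‖T' (T x)‖ := by rw [hT' x]
      _ ≤ ‖T'‖ * ‖T x‖ := T'.le_opNorm _
      _ ≤ (‖T'‖ + 1) * ‖T x‖ := by gcongr; linarith
  have hTpos : (0 : ℝ) < ‖T‖ + 1 := add_pos_of_nonneg_of_pos (norm_nonneg _) one_pos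
  refine ⟨div_pos hε₀ hT'pos, hν, hμ, hτ, ?_, ?_, ?_⟩
  · intro ε hε
    obtain ⟨δ, hδ, hδ'⟩ := hcont (ε / (‖T‖ + 1)) (div_pos hε hTpos)
    refine ⟨δ, hδ, fun k s₁ hs₁ s₂ hs₂ hss => ?_⟩
    have h1 : ‖ψ s₁ - ψ s₂‖ < ε / (‖T‖ + 1) := hδ' k s₁ hs₁ s₂ hs₂ hss
    have : (T (ψ s₁) + c) - (T (ψ s₂) + c) = T (ψ s₁ - ψ s₂) := by
      rw [map_sub]; abel
    rw [this]
    calc ‖T (ψ s₁ - ψ s₂)‖ ≤ ‖T‖ * ‖ψ s₁ - ψ s₂‖ := T.le_opNorm _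
      _ ≤ ‖T‖ * (ε / (‖T‖ + 1)) :=
          mul_le_mul_of_nonneg_left h1.le (norm_nonneg _)
      _ < (‖T‖ + 1) * (ε / (‖T‖ + 1)) :=
          mul_lt_mul_of_pos_right (by linarith) (div_pos hε hTpos)
      _ = ε := by rw [mul_comm, div_mul_cancel₀ ε hTpos.ne']
  · intro C hC
    have hg : UniformContinuous (fun x : EuclideanSpace ℝ (Fin m) => T x + c) :=
      T.uniformContinuous.add uniformContinuous_const
    exact hg.comp_tendstoUniformlyOn (hunif C hC)
  · intro n t ht
    have h1 : ε₀ ≤ ‖ψ (t + μ n) - ψ t‖ := hsep n t ht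
    have h2 : (T (ψ (t + μ n)) + c) - (T (ψ t) + c) = T (ψ (t + μ n) - ψ t) := by
      rw [map_sub]; abel
    rw [h2, div_le_iff₀ hT'pos, mul_comm]
    exact h1.trans (key _)

/-- Lemma 2.1: if `φ ∈ ℬ𝒫𝒞(θ)` is asymptotically unpredictable, then for every
vector `c` and every non-singular matrix `Ω` (spectral norm / Euclidean action), the function
`t ↦ Ω φ t + c` belongs to `ℬ𝒫𝒞(θ)` and is asymptotically unpredictable. -/
theorem statement0 (m p : ℕ) (hp : 1 ≤ p) (ω : ℝ) (hω : 0 < ω) (θ : ℤ → ℝ)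
    (hθ : SSeq p ω θ) (φ : ℝ → EuclideanSpace ℝ (Fin m))
    (hφ : AsympUnpredictable m θ φ)
    (c : EuclideanSpace ℝ (Fin m)) (Ω : Matrix (Fin m) (Fin m) ℝ) (hΩ : IsUnit Ω) :
    BPC m θ (fun t => Matrix.toEuclideanCLM (𝕜 := ℝ) Ω (φ t) + c) ∧
    AsympUnpredictable m θ (fun t => Matrix.toEuclideanCLM (𝕜 := ℝ) Ω (φ t) + c) := by
  classical
  set T : EuclideanSpace ℝ (Fin m) →L[ℝ] EuclideanSpace ℝ (Fin m) :=
    Matrix.toEuclideanCLM (𝕜 := ℝ) Ω with hT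
  obtain ⟨hbpc, ψ, ξ, ⟨hψbpc, ε₀, ν, μ, τ, hψ⟩, hξbpc, hξ0, hsum⟩ := hφ
  -- the inverse of `T`
  set Ω' : Matrix (Fin m) (Fin m) ℝ := ↑hΩ.unit⁻¹ with hΩ'
  set T' : EuclideanSpace ℝ (Fin m) →L[ℝ] EuclideanSpace ℝ (Fin m) :=
    Matrix.toEuclideanCLM (𝕜 := ℝ) Ω' with hT'
  have hinv : ∀ x, T' (T x) = x := by
    intro x
    have : T' * T = 1 := by
      rw [hT, hT', ← map_mul]
      have : Ω' * Ω = 1 := hΩ.unit.inv_mul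
      rw [this, map_one]
    calc T' (T x) = (T' * T) x := rfl
      _ = x := by rw [this]; rfl
  have hb := bpc_clm_add_const hbpc T c
  refine ⟨hb, hb, fun t => T (ψ t) + c, fun t => T (ξ t), ?_, ?_, ?_, ?_⟩
  · exact ⟨bpc_clm_add_const hψbpc T c, _, _, _, _, unpred_clm_add_const hψ T T' hinv c⟩
  · simpa only [add_zero] using bpc_clm_add_const hξbpc T 0
  · have hle : ∀ t : ℝ, ‖T (ξ t)‖ ≤ ‖T‖ * ‖ξ t‖ := fun t => T.le_opNorm _
    have : Tendsto (fun t : ℝ => ‖T‖ * ‖ξ t‖) atTop (nhds 0) := by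
      have h := hξ0.const_mul ‖T‖
      rw [mul_zero] at h
      exact h
    exact squeeze_zero (fun t => norm_nonneg _) hle this
  · intro t
    show T (φ t) + c = (T (ψ t) + c) + T (ξ t)
    rw [hsum t, map_add]
    abel
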